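/- In the partially linear model with two independent observations D_j, D_l with the common distribution, the (non-orthogonalized) R-SMD first-order condition holds at the truth: E[k(Z_j − Z_l) · P̃_j · (ỹ_l − ⟨P̃_l, θ₀⟩)] = 0 ∈ ℝ^p. Moreover, if the p×p matrix B := E[k(Z_j − Z_l) P̃_j P̃_lᵀ] is invertible, then θ₀ = B⁻¹ · E[k(Z_j − Z_l) P̃_j ỹ_l]. -/

import Mathlib

open MeasureTheory ProbabilityTheory Filter Topology Complex Matrix NNReal ENNReal

lemma aux_k_meas {qz : ℕ} (μ : Measure (Fin qz → ℝ)) [IsFiniteMeasure μ]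
    (k : (Fin qz → ℝ) → ℝ)
    (hk : ∀ u, (k u : ℂ) = ∫ t, Complex.exp (Complex.I * ((t ⬝ᵥ u : ℝ) : ℂ)) ∂μ) :
    Measurable k ∧ ∀ u, |k u| ≤ (μ Set.univ).toReal := by
  have hcont : Continuous (fun q : (Fin qz → ℝ) × (Fin qz → ℝ) =>
      Complex.exp (Complex.I * ((q.2 ⬝ᵥ q.1 : ℝ) : ℂ))) := by
    apply Complex.continuous_exp.comp
    apply continuous_const.mul
    apply Complex.continuous_ofReal.comp
    unfold dotProduct
    exact continuous_finset_sum _ fun i _ =>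
      ((continuous_apply i).comp continuous_snd).mul ((continuous_apply i).comp continuous_fst)
  have hsm : StronglyMeasurable (fun u => ∫ t, Complex.exp (Complex.I * ((t ⬝ᵥ u : ℝ) : ℂ)) ∂μ) :=
    hcont.stronglyMeasurable.integral_prod_right'
  constructor
  · have : k = fun u => (∫ t, Complex.exp (Complex.I * ((t ⬝ᵥ u : ℝ) : ℂ)) ∂μ).re := by
      funext u
      rw [← hk u, Complex.ofReal_re]
    rw [this]
    exact Complex.measurable_re.comp hsm.measurable
  · intro u
    have h1 : ‖(k u : ℂ)‖ ≤ 1 * (μ Set.univ).toReal := by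
      rw [hk u]
      apply norm_integral_le_of_norm_le_const
      filter_upwards with t
      have : (Complex.I * ((t ⬝ᵥ u : ℝ) : ℂ)).re = 0 := by simp
      rw [Complex.norm_exp, this, Real.exp_zero]
    simpa [Complex.norm_real, Real.norm_eq_abs] using h1

lemma aux_int_zero {Ω : Type*} [mΩ : MeasurableSpace Ω] {P : Measure Ω} [IsProbabilityMeasure P]
    {m : MeasurableSpace Ω} (hm : m ≤ mΩ) {φ e : Ω → ℝ}
    (hφ : StronglyMeasurable[m] φ) (hbd : ∃ C, ∀ x, ‖φ x‖ ≤ C)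
    (he : Integrable e P) (hcond : P[e|m] =ᵐ[P] 0) :
    ∫ ω, φ ω * e ω ∂P = 0 := by
  have : SigmaFinite (P.trim hm) := by
    have : IsFiniteMeasure (P.trim hm) := isFiniteMeasure_trim hm
    infer_instance
  have hint : Integrable (fun ω => φ ω * e ω) P :=
    he.bdd_mul (c := hbd.choose) ((hφ.mono hm).aestronglyMeasurable) (ae_of_all _ hbd.choose_spec)
  have h1 : ∫ ω, φ ω * e ω ∂P = ∫ ω, (P[fun ω => φ ω * e ω|m]) ω ∂P :=
    (integral_condExp hm (f := fun ω => φ ω * e ω)).symm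
  rw [h1]
  have h2 : P[fun ω => φ ω * e ω|m] =ᵐ[P] fun ω => φ ω * (P[e|m]) ω :=
    condExp_mul_of_stronglyMeasurable_left hφ hint he
  have h3 : (fun ω => φ ω * (P[e|m]) ω) =ᵐ[P] (fun _ => (0:ℝ)) := by
    filter_upwards [hcond] with ω hω
    simp [hω]
  rw [integral_congr_ae (h2.trans h3)]
  simp

/-- conditional-expectation identification through a continuous linear functional -/
lemma aux_clm_condexp {Ω : Type*} [mΩ : MeasurableSpace Ω] {P : Measure Ω}
    [IsProbabilityMeasure P] {p qX : ℕ}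
    {Pv : Ω → Fin p → ℝ} {X : Ω → Fin qX → ℝ} (hXmeas : Measurable X)
    (hPint : Integrable Pv P)
    {gP : (Fin qX → ℝ) → Fin p → ℝ} (hgPmeas : Measurable gP)
    (hgP : (fun ω => gP (X ω)) =ᵐ[P] P[Pv | MeasurableSpace.comap X inferInstance])
    (L : (Fin p → ℝ) →L[ℝ] ℝ) :
    (fun ω => L (gP (X ω)))
      =ᵐ[P] P[(fun ω => L (Pv ω)) | MeasurableSpace.comap X inferInstance] := by
  have hm' : MeasurableSpace.comap X inferInstance ≤ mΩ := hXmeas.comap_le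
  have : SigmaFinite (P.trim hm') := by
    have : IsFiniteMeasure (P.trim hm') := isFiniteMeasure_trim hm'
    infer_instance
  have hLint : Integrable (fun ω => L (Pv ω)) P := L.integrable_comp hPint
  have hgint : Integrable (fun ω => L (gP (X ω))) P := by
    have h1 : Integrable (P[Pv|MeasurableSpace.comap X inferInstance]) P := integrable_condExp
    have h2 : Integrable
        (fun ω => L ((P[Pv|MeasurableSpace.comap X inferInstance]) ω)) P :=
      L.integrable_comp h1
    exact h2.congr (by filter_upwards [hgP] with ω hω; rw [hω])
  have hXm' : Measurable[MeasurableSpace.comap X inferInstance] X :=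
    Measurable.of_comap_le le_rfl
  have hgm' : Measurable[MeasurableSpace.comap X inferInstance] (fun ω => L (gP (X ω))) :=
    L.measurable.comp (hgPmeas.comp hXm')
  have hgsm : StronglyMeasurable[MeasurableSpace.comap X inferInstance]
      (fun ω => L (gP (X ω))) := hgm'.stronglyMeasurable
  refine ae_eq_condExp_of_forall_setIntegral_eq hm' hLint
    (fun s _ _ => hgint.integrableOn) (fun s hs hμs => ?_)
    hgsm.aestronglyMeasurable
  have hs' : MeasurableSet[mΩ] s := hm' s hs
  calc ∫ ω in s, L (gP (X ω)) ∂P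
      = ∫ ω in s, L ((P[Pv|MeasurableSpace.comap X inferInstance]) ω) ∂P := by
        refine setIntegral_congr_ae hs' ?_
        filter_upwards [hgP] with ω hω _
        rw [hω]
    _ = L (∫ ω in s, (P[Pv|MeasurableSpace.comap X inferInstance]) ω ∂P) :=
        L.integral_comp_comm integrable_condExp.integrableOn
    _ = L (∫ ω in s, Pv ω ∂P) := by rw [setIntegral_condExp hm' hPint hs]
    _ = ∫ ω in s, L (Pv ω) ∂P := (L.integral_comp_comm hPint.integrableOn).symm

/-- The (non-orthogonalized) R-SMD first-order condition holds at the truth: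
`E[k(Z_j − Z_l) P̃_j (ỹ_l − ⟨P̃_l, θ₀⟩)] = 0`, and if `B := E[k(Z_j − Z_l) P̃_j P̃_lᵀ]`
is invertible then `θ₀ = B⁻¹ E[k(Z_j − Z_l) P̃_j ỹ_l]`. -/
theorem rsmd_foc_at_truth
    {Ω : Type*} [MeasurableSpace Ω] (P : Measure Ω) [IsProbabilityMeasure P]
    {p qX qz : ℕ}
    (μ : Measure (Fin qz → ℝ)) [IsFiniteMeasure μ]
    (hμsymm : μ.map (fun t => -t) = μ)
    (k : (Fin qz → ℝ) → ℝ)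
    (hk : ∀ u, (k u : ℂ) = ∫ t, Complex.exp (Complex.I * ((t ⬝ᵥ u : ℝ) : ℂ)) ∂μ)
    (θ₀ : Fin p → ℝ) (f : (Fin qX → ℝ) → ℝ) (hfmeas : Measurable f)
    (y : Fin 2 → Ω → ℝ) (Pv : Fin 2 → Ω → Fin p → ℝ)
    (X : Fin 2 → Ω → Fin qX → ℝ) (Z : Fin 2 → Ω → Fin qz → ℝ)
    (ε : Fin 2 → Ω → ℝ)
    (hymeas : ∀ i, Measurable (y i)) (hPmeas : ∀ i, Measurable (Pv i))
    (hXmeas : ∀ i, Measurable (X i)) (hZmeas : ∀ i, Measurable (Z i))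
    (hyL2 : ∀ i, MemLp (y i) 2 P) (hPL2 : ∀ i, MemLp (Pv i) 2 P)
    (hXL2 : ∀ i, MemLp (X i) 2 P) (hZL2 : ∀ i, MemLp (Z i) 2 P)
    (hεint : ∀ i, Integrable (ε i) P)
    (hmodel : ∀ i ω, y i ω = Pv i ω ⬝ᵥ θ₀ + f (X i ω) + ε i ω)
    (hεcond : ∀ i, P[ε i | MeasurableSpace.comap (fun ω => (X i ω, Z i ω)) inferInstance]
        =ᵐ[P] 0)
    (hindep : IndepFun (fun ω => (y 0 ω, Pv 0 ω, X 0 ω, Z 0 ω))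
        (fun ω => (y 1 ω, Pv 1 ω, X 1 ω, Z 1 ω)) P)
    (hident : IdentDistrib (fun ω => (y 0 ω, Pv 0 ω, X 0 ω, Z 0 ω))
        (fun ω => (y 1 ω, Pv 1 ω, X 1 ω, Z 1 ω)) P P)
    (gy : (Fin qX → ℝ) → ℝ) (gP : (Fin qX → ℝ) → Fin p → ℝ)
    (hgymeas : Measurable gy) (hgPmeas : Measurable gP)
    (hgy : ∀ i, (fun ω => gy (X i ω))
        =ᵐ[P] P[y i | MeasurableSpace.comap (X i) inferInstance])
    (hgP : ∀ i, (fun ω => gP (X i ω))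
        =ᵐ[P] P[Pv i | MeasurableSpace.comap (X i) inferInstance])
    (ytil : Fin 2 → Ω → ℝ) (Ptil : Fin 2 → Ω → Fin p → ℝ)
    (hytil : ∀ i ω, ytil i ω = y i ω - gy (X i ω))
    (hPtil : ∀ i ω, Ptil i ω = Pv i ω - gP (X i ω))
    (B : Matrix (Fin p) (Fin p) ℝ)
    (hB : B = Matrix.of fun a b => ∫ ω, k (Z 0 ω - Z 1 ω) * (Ptil 0 ω a * Ptil 1 ω b) ∂P) :
    (∀ a : Fin p,
        ∫ ω, k (Z 0 ω - Z 1 ω) * (Ptil 0 ω a * (ytil 1 ω - Ptil 1 ω ⬝ᵥ θ₀)) ∂P = 0) ∧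
    (IsUnit B.det →
      θ₀ = B⁻¹.mulVec fun a => ∫ ω, k (Z 0 ω - Z 1 ω) * (Ptil 0 ω a * ytil 1 ω) ∂P) := by
  classical
  obtain ⟨hkmeas, hkbd⟩ := aux_k_meas μ k hk
  set C := (μ Set.univ).toReal with hC
  -- observation tuples
  set T := ℝ × (Fin p → ℝ) × (Fin qX → ℝ) × (Fin qz → ℝ) with hTdef
  set W : Fin 2 → Ω → T :=
    fun i ω => (y i ω, Pv i ω, X i ω, Z i ω) with hWdef
  have hWmeas : ∀ i, Measurable (W i) := fun i =>
    (hymeas i).prodMk ((hPmeas i).prodMk ((hXmeas i).prodMk (hZmeas i)))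
  -- σ-algebras
  set m : Fin 2 → MeasurableSpace Ω :=
    fun i => MeasurableSpace.comap (fun ω => (X i ω, Z i ω)) inferInstance with hmdef
  set m' : Fin 2 → MeasurableSpace Ω :=
    fun i => MeasurableSpace.comap (X i) inferInstance with hm'def
  have hm : ∀ i, m i ≤ ‹MeasurableSpace Ω› := fun i =>
    ((hXmeas i).prodMk (hZmeas i)).comap_le
  have hm'le : ∀ i, m' i ≤ m i := by
    intro i
    show MeasurableSpace.comap (X i) inferInstance ≤
      MeasurableSpace.comap (fun ω => (X i ω, Z i ω)) inferInstance
    have hXi : MeasurableSpace.comap (X i) inferInstance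
        = MeasurableSpace.comap (fun ω => (X i ω, Z i ω))
          (MeasurableSpace.comap (Prod.fst) inferInstance) := by
      rw [MeasurableSpace.comap_comp]; rfl
    rw [hXi]
    exact MeasurableSpace.comap_mono measurable_fst.comap_le
  have hm' : ∀ i, m' i ≤ ‹MeasurableSpace Ω› := fun i => (hm'le i).trans (hm i)
  -- basic integrability
  have hyint : ∀ i, Integrable (y i) P := fun i => (hyL2 i).integrable one_le_two
  have hPvint : ∀ i, Integrable (Pv i) P := fun i => (hPL2 i).integrable one_le_two
  have hPvb_int : ∀ i b, Integrable (fun ω => Pv i ω b) P := fun i b =>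
    (ContinuousLinearMap.proj (R := ℝ) (φ := fun _ : Fin p => ℝ) b).integrable_comp (hPvint i)
  have hdot_int : ∀ i, Integrable (fun ω => Pv i ω ⬝ᵥ θ₀) P := by
    intro i
    have : (fun ω => Pv i ω ⬝ᵥ θ₀) = fun ω => ∑ b, Pv i ω b * θ₀ b := by
      funext ω; rfl
    rw [this]
    exact integrable_finset_sum _ fun b _ => (hPvb_int i b).mul_const _
  have hfX_int : ∀ i, Integrable (fun ω => f (X i ω)) P := by
    intro i
    have : (fun ω => f (X i ω)) = fun ω => y i ω - Pv i ω ⬝ᵥ θ₀ - ε i ω := by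
      funext ω; rw [hmodel i ω]; ring
    rw [this]
    exact ((hyint i).sub (hdot_int i)).sub (hεint i)
  have hgyX_int : ∀ i, Integrable (fun ω => gy (X i ω)) P := fun i =>
    integrable_condExp.congr (hgy i).symm
  -- CLM-projected conditional expectations of Pv
  have hclm : ∀ i (L : (Fin p → ℝ) →L[ℝ] ℝ),
      (fun ω => L (gP (X i ω))) =ᵐ[P] P[(fun ω => L (Pv i ω)) | m' i] := fun i L =>
    aux_clm_condexp (hXmeas i) (hPvint i) hgPmeas (hgP i) L
  have hgPb_int : ∀ i b, Integrable (fun ω => gP (X i ω) b) P := by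
    intro i b
    have := hclm i (ContinuousLinearMap.proj (R := ℝ) (φ := fun _ : Fin p => ℝ) b)
    exact integrable_condExp.congr this.symm
  have hPtilb_int : ∀ i b, Integrable (fun ω => Ptil i ω b) P := by
    intro i b
    have : (fun ω => Ptil i ω b) = fun ω => Pv i ω b - gP (X i ω) b := by
      funext ω; rw [hPtil i ω]; rfl
    rw [this]
    exact (hPvb_int i b).sub (hgPb_int i b)
  have hytil_int : ∀ i, Integrable (ytil i) P := by
    intro i
    have : ytil i = fun ω => y i ω - gy (X i ω) := funext (hytil i)
    rw [this]
    exact (hyint i).sub (hgyX_int i)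
  -- the dot-product CLM
  set Lθ : (Fin p → ℝ) →L[ℝ] ℝ :=
    ∑ b, θ₀ b • ContinuousLinearMap.proj (R := ℝ) (φ := fun _ : Fin p => ℝ) b with hLθdef
  have hLθ : ∀ w : Fin p → ℝ, Lθ w = w ⬝ᵥ θ₀ := by
    intro w
    rw [hLθdef]
    simp [ContinuousLinearMap.sum_apply, dotProduct, mul_comm]
  -- conditional expectation of ε given X is zero (tower property)
  have hεcondX : ∀ i, P[ε i | m' i] =ᵐ[P] 0 := by
    intro i
    have : SigmaFinite (P.trim (hm i)) := by
      have : IsFiniteMeasure (P.trim (hm i)) := isFiniteMeasure_trim (hm i)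
      infer_instance
    have h1 : P[P[ε i | m i] | m' i] =ᵐ[P] P[ε i | m' i] :=
      condExp_condExp_of_le (hm'le i) (hm i)
    have h2 : P[P[ε i | m i] | m' i] =ᵐ[P] P[(0 : Ω → ℝ) | m' i] :=
      condExp_congr_ae (hεcond i)
    refine h1.symm.trans (h2.trans ?_)
    rw [condExp_zero]
  -- identification: gy (X i) = gP (X i) ⬝ᵥ θ₀ + f (X i) a.e.
  have hgyid : ∀ i, (fun ω => gy (X i ω)) =ᵐ[P]
      fun ω => gP (X i ω) ⬝ᵥ θ₀ + f (X i ω) := by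
    intro i
    have : SigmaFinite (P.trim (hm' i)) := by
      have : IsFiniteMeasure (P.trim (hm' i)) := isFiniteMeasure_trim (hm' i)
      infer_instance
    have hy_eq : y i = fun ω => (fun ω => Pv i ω ⬝ᵥ θ₀) ω + ((fun ω => f (X i ω)) ω
        + ε i ω) := by
      funext ω; rw [hmodel i ω]; ring
    have hXm' : Measurable[m' i] (X i) := by
      rw [hm'def]; exact Measurable.of_comap_le le_rfl
    have hfXc : P[(fun ω => f (X i ω)) | m' i] =ᵐ[P] fun ω => f (X i ω) := by
      have hfm' : Measurable[m' i] (fun ω => f (X i ω)) := hfmeas.comp hXm'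
      have := condExp_of_stronglyMeasurable (μ := P) (hm' i)
        hfm'.stronglyMeasurable (hfX_int i)
      rw [this]
    have hdotc : P[(fun ω => Pv i ω ⬝ᵥ θ₀) | m' i] =ᵐ[P] fun ω => gP (X i ω) ⬝ᵥ θ₀ := by
      have h1 := hclm i Lθ
      have h2 : (fun ω => Lθ (Pv i ω)) = fun ω => Pv i ω ⬝ᵥ θ₀ := funext fun ω => hLθ _
      have h3 : (fun ω => Lθ (gP (X i ω))) = fun ω => gP (X i ω) ⬝ᵥ θ₀ :=
        funext fun ω => hLθ _
      rw [h2, h3] at h1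
      exact h1.symm
    calc (fun ω => gy (X i ω)) =ᵐ[P] P[y i | m' i] := hgy i
      _ =ᵐ[P] P[(fun ω => Pv i ω ⬝ᵥ θ₀) | m' i]
          + P[(fun ω => (fun ω => f (X i ω)) ω + ε i ω) | m' i] := by
            rw [hy_eq]
            exact condExp_add (hdot_int i) ((hfX_int i).add (hεint i)) _
      _ =ᵐ[P] fun ω => gP (X i ω) ⬝ᵥ θ₀ + f (X i ω) := by
            have h4 : P[(fun ω => (fun ω => f (X i ω)) ω + ε i ω) | m' i]
                =ᵐ[P] P[(fun ω => f (X i ω)) | m' i] + P[ε i | m' i] :=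
              condExp_add (hfX_int i) (hεint i) _
            filter_upwards [hdotc, h4, hfXc, hεcondX i] with ω hω1 hω2 hω3 hω4
            simp only [Pi.add_apply] at *
            rw [hω1, hω2, hω3, hω4]
            simp
  -- the residual e₁ equals ε₁ a.e.
  have he1 : (fun ω => ytil 1 ω - Ptil 1 ω ⬝ᵥ θ₀) =ᵐ[P] ε 1 := by
    filter_upwards [hgyid 1] with ω hω
    rw [hytil 1 ω, hPtil 1 ω, hmodel 1 ω, sub_dotProduct, hω]
    ring
  have he1_int : Integrable (fun ω => ytil 1 ω - Ptil 1 ω ⬝ᵥ θ₀) P :=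
    (hεint 1).congr he1.symm
  have he1_cond : P[(fun ω => ytil 1 ω - Ptil 1 ω ⬝ᵥ θ₀) | m 1] =ᵐ[P] 0 :=
    (condExp_congr_ae he1).trans (hεcond 1)
  -- inner integral vanishes
  have hinner : ∀ z₀ : Fin qz → ℝ,
      ∫ ω, k (z₀ - Z 1 ω) * (ytil 1 ω - Ptil 1 ω ⬝ᵥ θ₀) ∂P = 0 := by
    intro z₀
    have hpair : Measurable[m 1] (fun ω => (X 1 ω, Z 1 ω)) := by
      rw [hmdef]; exact Measurable.of_comap_le le_rfl
    have hZm : Measurable[m 1] (Z 1) := measurable_snd.comp hpair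
    exact aux_int_zero (hm 1)
      ((hkmeas.comp (measurable_const.sub hZm)).stronglyMeasurable)
      ⟨C, fun x => by simpa [Real.norm_eq_abs] using hkbd (z₀ - Z 1 x)⟩
      he1_int he1_cond
  -- push-forward measures and independence
  set ν : Fin 2 → Measure T := fun i => P.map (W i) with hνdef
  haveI hprob0 : IsProbabilityMeasure (ν 0) := Measure.isProbabilityMeasure_map (hWmeas 0).aemeasurable
  haveI hprob1 : IsProbabilityMeasure (ν 1) := Measure.isProbabilityMeasure_map (hWmeas 1).aemeasurable
  have hmap : P.map (fun ω => (W 0 ω, W 1 ω)) = (ν 0).prod (ν 1) :=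
    (indepFun_iff_map_prod_eq_prod_map_map (hWmeas 0).aemeasurable
      (hWmeas 1).aemeasurable).mp hindep
  -- coordinate measurability on T
  have hyt : Measurable (fun w : T => w.1) := measurable_fst
  have hpt : Measurable (fun w : T => w.2.1) := measurable_fst.comp measurable_snd
  have hxt : Measurable (fun w : T => w.2.2.1) :=
    measurable_fst.comp (measurable_snd.comp measurable_snd)
  have hzt : Measurable (fun w : T => w.2.2.2) :=
    measurable_snd.comp (measurable_snd.comp measurable_snd)
  -- the key integrability / vanishing lemma
  have keyInt : ∀ (h : T → ℝ), Measurable h → Integrable (fun ω => h (W 1 ω)) P →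
      ∀ a : Fin p,
      Integrable (fun ω => k (Z 0 ω - Z 1 ω) * (Ptil 0 ω a * h (W 1 ω))) P ∧
      ((∀ z₀, ∫ ω, k (z₀ - Z 1 ω) * h (W 1 ω) ∂P = 0) →
        ∫ ω, k (Z 0 ω - Z 1 ω) * (Ptil 0 ω a * h (W 1 ω)) ∂P = 0) := by
    intro h hhmeas hhint a
    set G : T → ℝ := fun w => (w.2.1 - gP w.2.2.1) a with hGdef
    have hGmeas : Measurable G := (measurable_pi_apply a).comp (hpt.sub (hgPmeas.comp hxt))
    set F : T × T → ℝ :=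
      fun q => k (q.1.2.2.2 - q.2.2.2.2) * (G q.1 * h q.2) with hFdef
    have hkpart : Measurable (fun q : T × T => k (q.1.2.2.2 - q.2.2.2.2)) :=
      hkmeas.comp ((hzt.comp measurable_fst).sub (hzt.comp measurable_snd))
    have hFmeas : Measurable F :=
      hkpart.mul ((hGmeas.comp measurable_fst).mul (hhmeas.comp measurable_snd))
    have hGν : Integrable G (ν 0) := by
      show Integrable G (P.map (W 0))
      refine (integrable_map_measure hGmeas.aestronglyMeasurable
        (hWmeas 0).aemeasurable).mpr ?_
      refine (hPtilb_int 0 a).congr ?_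
      filter_upwards with ω
      rw [hPtil 0 ω]
      rfl
    have hhν : Integrable h (ν 1) := by
      show Integrable h (P.map (W 1))
      exact (integrable_map_measure hhmeas.aestronglyMeasurable
        (hWmeas 1).aemeasurable).mpr hhint
    have hFprod : Integrable F ((ν 0).prod (ν 1)) := by
      refine (hGν.mul_prod hhν).bdd_mul (c := C) hkpart.aestronglyMeasurable ?_
      exact ae_of_all _ (fun q => by simpa [Real.norm_eq_abs] using hkbd (q.1.2.2.2 - q.2.2.2.2))
    have hpairmeas : Measurable (fun ω => (W 0 ω, W 1 ω)) :=
      (hWmeas 0).prodMk (hWmeas 1)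
    have hFpair : Integrable (fun ω => F (W 0 ω, W 1 ω)) P := by
      have h1 : Integrable F (P.map (fun ω => (W 0 ω, W 1 ω))) := by rw [hmap]; exact hFprod
      exact (integrable_map_measure hFmeas.aestronglyMeasurable
        hpairmeas.aemeasurable).mp h1
    have hpt_eq : ∀ ω, F (W 0 ω, W 1 ω) = k (Z 0 ω - Z 1 ω) * (Ptil 0 ω a * h (W 1 ω)) := by
      intro ω
      rw [hFdef, hGdef, hPtil 0 ω]
    constructor
    · exact hFpair.congr (Filter.Eventually.of_forall hpt_eq)
    · intro hz
      have hinner0 : ∀ w : T, ∫ w', F (w, w') ∂(ν 1) = 0 := by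
        intro w
        have h1 : ∀ w' : T, F (w, w') = G w * (k (w.2.2.2 - w'.2.2.2) * h w') := by
          intro w'
          rw [hFdef]
          ring
        calc ∫ w', F (w, w') ∂(ν 1)
            = ∫ w', G w * (k (w.2.2.2 - w'.2.2.2) * h w') ∂(ν 1) := by
              exact integral_congr_ae (Filter.Eventually.of_forall h1)
          _ = G w * ∫ w', k (w.2.2.2 - w'.2.2.2) * h w' ∂(ν 1) := integral_const_mul _ _
          _ = G w * ∫ ω, k (w.2.2.2 - Z 1 ω) * h (W 1 ω) ∂P := by
              have hν1 : ν 1 = P.map (W 1) := rfl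
              rw [hν1]
              rw [integral_map (hWmeas 1).aemeasurable
                (show AEStronglyMeasurable (fun w' : T => k (w.2.2.2 - w'.2.2.2) * h w')
                    (P.map (W 1)) from
                  ((hkmeas.comp (measurable_const.sub hzt)).mul hhmeas).aestronglyMeasurable)]
          _ = 0 := by rw [hz w.2.2.2, mul_zero]
      calc ∫ ω, k (Z 0 ω - Z 1 ω) * (Ptil 0 ω a * h (W 1 ω)) ∂P
          = ∫ ω, F (W 0 ω, W 1 ω) ∂P :=
            integral_congr_ae (Filter.Eventually.of_forall fun ω => (hpt_eq ω).symm)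
        _ = ∫ q, F q ∂(P.map (fun ω => (W 0 ω, W 1 ω))) :=
            (integral_map hpairmeas.aemeasurable hFmeas.aestronglyMeasurable).symm
        _ = ∫ q, F q ∂((ν 0).prod (ν 1)) := by rw [hmap]
        _ = ∫ w, ∫ w', F (w, w') ∂(ν 1) ∂(ν 0) := integral_prod F hFprod
        _ = 0 := by simp [hinner0]
  -- the residual functional on T
  set He : T → ℝ := fun w => (w.1 - gy w.2.2.1) - (w.2.1 - gP w.2.2.1) ⬝ᵥ θ₀ with hHedef
  have hHb_meas : ∀ b : Fin p, Measurable (fun w : T => (w.2.1 - gP w.2.2.1) b) :=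
    fun b => (measurable_pi_apply b).comp (hpt.sub (hgPmeas.comp hxt))
  have hHy_meas : Measurable (fun w : T => w.1 - gy w.2.2.1) := hyt.sub (hgymeas.comp hxt)
  have hHe_meas : Measurable He := by
    rw [hHedef]
    refine hHy_meas.sub ?_
    have hd : (fun w : T => (w.2.1 - gP w.2.2.1) ⬝ᵥ θ₀)
        = fun w => ∑ b, (w.2.1 - gP w.2.2.1) b * θ₀ b := by
      funext w; rfl
    rw [hd]
    exact Finset.measurable_sum _ fun b _ => (hHb_meas b).mul_const _
  have hHe_W : ∀ ω, He (W 1 ω) = ytil 1 ω - Ptil 1 ω ⬝ᵥ θ₀ := by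
    intro ω
    rw [hHedef, hytil 1 ω, hPtil 1 ω]
  have hHe_int : Integrable (fun ω => He (W 1 ω)) P :=
    he1_int.congr (Filter.Eventually.of_forall fun ω => (hHe_W ω).symm)
  have hHe_zero : ∀ z₀, ∫ ω, k (z₀ - Z 1 ω) * He (W 1 ω) ∂P = 0 := by
    intro z₀
    calc ∫ ω, k (z₀ - Z 1 ω) * He (W 1 ω) ∂P
        = ∫ ω, k (z₀ - Z 1 ω) * (ytil 1 ω - Ptil 1 ω ⬝ᵥ θ₀) ∂P :=
          integral_congr_ae (Filter.Eventually.of_forall fun ω => by simp only [hHe_W ω])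
      _ = 0 := hinner z₀
  -- Part 1: the FOC
  have part1 : ∀ a : Fin p,
      ∫ ω, k (Z 0 ω - Z 1 ω) * (Ptil 0 ω a * (ytil 1 ω - Ptil 1 ω ⬝ᵥ θ₀)) ∂P = 0 := by
    intro a
    have h0 := (keyInt He hHe_meas hHe_int a).2 hHe_zero
    calc ∫ ω, k (Z 0 ω - Z 1 ω) * (Ptil 0 ω a * (ytil 1 ω - Ptil 1 ω ⬝ᵥ θ₀)) ∂P
        = ∫ ω, k (Z 0 ω - Z 1 ω) * (Ptil 0 ω a * He (W 1 ω)) ∂P :=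
          integral_congr_ae (Filter.Eventually.of_forall fun ω => by simp only [hHe_W ω])
      _ = 0 := h0
  -- Part 2: integrability of the pieces
  set Hy : T → ℝ := fun w => w.1 - gy w.2.2.1 with hHydef
  have hHyW : ∀ ω, Hy (W 1 ω) = ytil 1 ω := by
    intro ω; rw [hHydef, hytil 1 ω]
  have hHy_int : Integrable (fun ω => Hy (W 1 ω)) P :=
    (hytil_int 1).congr (Filter.Eventually.of_forall fun ω => (hHyW ω).symm)
  have hIy : ∀ a, Integrable (fun ω => k (Z 0 ω - Z 1 ω) * (Ptil 0 ω a * ytil 1 ω)) P := by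
    intro a
    exact ((keyInt Hy hHy_meas hHy_int a).1).congr
      (Filter.Eventually.of_forall fun ω => by simp only [hHyW ω])
  have hHbW : ∀ (b : Fin p) ω, (fun w : T => (w.2.1 - gP w.2.2.1) b) (W 1 ω) = Ptil 1 ω b := by
    intro b ω; rw [hPtil 1 ω]
  have hHb_int : ∀ b : Fin p,
      Integrable (fun ω => (fun w : T => (w.2.1 - gP w.2.2.1) b) (W 1 ω)) P := fun b =>
    (hPtilb_int 1 b).congr (Filter.Eventually.of_forall fun ω => (hHbW b ω).symm)
  have hIb : ∀ a b, Integrable (fun ω => k (Z 0 ω - Z 1 ω) * (Ptil 0 ω a * Ptil 1 ω b)) P := by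
    intro a b
    exact ((keyInt (fun w : T => (w.2.1 - gP w.2.2.1) b) (hHb_meas b) (hHb_int b) a).1).congr
      (Filter.Eventually.of_forall fun ω => by simp only [hHbW b ω])
  -- splitting the FOC integral
  have hsplit : ∀ a : Fin p,
      ∫ ω, k (Z 0 ω - Z 1 ω) * (Ptil 0 ω a * (ytil 1 ω - Ptil 1 ω ⬝ᵥ θ₀)) ∂P
      = (∫ ω, k (Z 0 ω - Z 1 ω) * (Ptil 0 ω a * ytil 1 ω) ∂P)
        - ∑ b, θ₀ b * ∫ ω, k (Z 0 ω - Z 1 ω) * (Ptil 0 ω a * Ptil 1 ω b) ∂P := by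
    intro a
    have hfun : (fun ω => k (Z 0 ω - Z 1 ω) * (Ptil 0 ω a * (ytil 1 ω - Ptil 1 ω ⬝ᵥ θ₀)))
        = fun ω => k (Z 0 ω - Z 1 ω) * (Ptil 0 ω a * ytil 1 ω)
            - ∑ b, θ₀ b * (k (Z 0 ω - Z 1 ω) * (Ptil 0 ω a * Ptil 1 ω b)) := by
      funext ω
      simp only [dotProduct]
      rw [mul_sub, mul_sub, Finset.mul_sum, Finset.mul_sum]
      congr 1
      refine Finset.sum_congr rfl fun b _ => ?_
      ring
    rw [hfun, integral_sub (hIy a)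
      (integrable_finset_sum _ fun b _ => ((hIb a b).const_mul (θ₀ b))),
      integral_finset_sum _ fun b _ => ((hIb a b).const_mul (θ₀ b))]
    congr 1
    exact Finset.sum_congr rfl fun b _ => integral_const_mul _ _
  have hBv : B.mulVec θ₀
      = fun a => ∫ ω, k (Z 0 ω - Z 1 ω) * (Ptil 0 ω a * ytil 1 ω) ∂P := by
    funext a
    have h1 := part1 a
    rw [hsplit a] at h1
    have h2 : B.mulVec θ₀ a
        = ∑ b, (∫ ω, k (Z 0 ω - Z 1 ω) * (Ptil 0 ω a * Ptil 1 ω b) ∂P) * θ₀ b := by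
      rw [hB]; rfl
    have h3 : ∑ b, (∫ ω, k (Z 0 ω - Z 1 ω) * (Ptil 0 ω a * Ptil 1 ω b) ∂P) * θ₀ b
        = ∑ b, θ₀ b * ∫ ω, k (Z 0 ω - Z 1 ω) * (Ptil 0 ω a * Ptil 1 ω b) ∂P :=
      Finset.sum_congr rfl fun b _ => mul_comm _ _
    rw [h2, h3]
    linarith
  refine ⟨part1, fun hdet => ?_⟩
  have h1 : B⁻¹.mulVec (B.mulVec θ₀) = θ₀ := by
    rw [Matrix.mulVec_mulVec, Matrix.nonsing_inv_mul B hdet, Matrix.one_mulVec]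
  rw [← h1, hBv]
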